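/- arXiv:1901.09412 — 4 statements merged into one kernel-verified Lean document; each statement's English description precedes it below -/
import Mathlib

section
/- Every sequence of k(n-1)^2 + 1 integers contains a subsequence of cardinality at least n which is k-singular, i.e., whose terms are either all equal, or, when sorted increasingly, any two consecutive terms differ by at least k. -/
/-- A finite multiset of integers is `k`-singular if all its elements are equal,
or its elements are pairwise distinct and any two distinct elements differ by at
least `k` (equivalently, when sorted increasingly, consecutive terms differ by at
least `k`). -/
def KSingular (k : ℤ) (m : Multiset ℤ) : Prop :=
  (∀ x ∈ m, ∀ y ∈ m, x = y) ∨
  (m.Nodup ∧ ∀ x ∈ m, ∀ y ∈ m, x ≠ y → k ≤ |x - y|)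

/-- Every sequence of `k(n-1)^2 + 1` integers contains a `k`-singular
subsequence of cardinality at least `n`. -/
theorem stmt_0 (k n : ℕ) (hk : 1 ≤ k) (hn : 1 ≤ n)
    (a : Fin (k * (n - 1) ^ 2 + 1) → ℤ) :
    ∃ s : Finset (Fin (k * (n - 1) ^ 2 + 1)),
      n ≤ s.card ∧ KSingular (k : ℤ) (s.val.map a) := by
  have hkz : (0:ℤ) < (k:ℤ) := by exact_mod_cast hk
  have hmaps : ∀ i ∈ (Finset.univ : Finset (Fin (k * (n - 1) ^ 2 + 1))),
      a i % k ∈ Finset.Ico (0:ℤ) k := by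
    intro i _
    simp only [Finset.mem_Ico]
    exact ⟨Int.emod_nonneg _ (ne_of_gt hkz), Int.emod_lt_of_pos _ hkz⟩
  have hcard : (Finset.Ico (0:ℤ) (k:ℤ)).card * ((n-1)^2)
      < (Finset.univ : Finset (Fin (k * (n - 1) ^ 2 + 1))).card := by
    rw [Int.card_Ico]
    simp
  obtain ⟨c, _, hc⟩ :=
    Finset.exists_lt_card_fiber_of_mul_lt_card_of_maps_to hmaps hcard
  set T := Finset.univ.filter (fun i : Fin (k * (n - 1) ^ 2 + 1) => a i % k = c) with hT
  have hTmem : ∀ i ∈ T, a i % k = c := by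
    intro i hi; simpa [hT] using hi
  have hdist : ∀ i ∈ T, ∀ j ∈ T, a i ≠ a j → (k:ℤ) ≤ |a i - a j| := by
    intro i hi j hj hne
    have hmod : a j ≡ a i [ZMOD (k:ℤ)] := by
      unfold Int.ModEq
      rw [hTmem i hi, hTmem j hj]
    have hdvd : (k:ℤ) ∣ a i - a j := hmod.dvd
    exact Int.le_of_dvd (abs_pos.mpr (sub_ne_zero.mpr hne)) ((dvd_abs _ _).mpr hdvd)
  by_cases hrep : ∃ v, n ≤ (T.filter (fun i => a i = v)).card
  · obtain ⟨v, hv⟩ := hrep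
    refine ⟨T.filter (fun i => a i = v), hv, Or.inl ?_⟩
    intro x hx y hy
    simp only [Multiset.mem_map] at hx hy
    obtain ⟨i, hi, rfl⟩ := hx
    obtain ⟨j, hj, rfl⟩ := hy
    rw [Finset.mem_val] at hi hj
    have hi' : a i = v := (Finset.mem_filter.mp hi).2
    have hj' : a j = v := (Finset.mem_filter.mp hj).2
    rw [hi', hj']
  · push_neg at hrep
    have hfib : ∀ v, (T.filter (fun i => a i = v)).card ≤ n - 1 := by
      intro v
      have := hrep v
      omega
    have hTcard : (n-1)^2 < T.card := hc
    have hsum : T.card = ∑ b ∈ T.image a, (T.filter (fun i => a i = b)).card :=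
      Finset.card_eq_sum_card_fiberwise (fun i hi => Finset.mem_image_of_mem a hi)
    have hle : T.card ≤ (T.image a).card * (n-1) := by
      rw [hsum]
      calc ∑ b ∈ T.image a, (T.filter (fun i => a i = b)).card
          ≤ ∑ _b ∈ T.image a, (n-1) := Finset.sum_le_sum (fun b _ => hfib b)
        _ = (T.image a).card * (n-1) := by rw [Finset.sum_const, smul_eq_mul]
    have himg : n ≤ (T.image a).card := by
      have h1 : (n-1) * (n-1) < (T.image a).card * (n-1) := by
        calc (n-1) * (n-1) = (n-1)^2 := (sq (n-1)).symm
          _ < T.card := hTcard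
          _ ≤ _ := hle
      have := lt_of_mul_lt_mul_right h1 (Nat.zero_le _)
      omega
    have hrep' : ∀ b ∈ T.image a, ∃ i, i ∈ T ∧ a i = b := by
      intro b hb
      simpa using Finset.mem_image.mp hb
    choose f hfT hfa using hrep'
    set s : Finset (Fin (k * (n - 1) ^ 2 + 1)) :=
      (T.image a).attach.image (fun b => f b.1 b.2) with hs
    have hsT : ∀ i ∈ s, i ∈ T := by
      intro i hi
      simp only [hs, Finset.mem_image] at hi
      obtain ⟨b, _, rfl⟩ := hi
      exact hfT b.1 b.2
    have hainj : ∀ x ∈ s, ∀ y ∈ s, a x = a y → x = y := by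
      intro x hx y hy hxy
      simp only [hs, Finset.mem_image] at hx hy
      obtain ⟨b1, _, rfl⟩ := hx
      obtain ⟨b2, _, rfl⟩ := hy
      have hb : b1.1 = b2.1 := by
        rw [← hfa b1.1 b1.2, ← hfa b2.1 b2.2]
        exact hxy
      have : b1 = b2 := Subtype.ext hb
      rw [this]
    have hscard : n ≤ s.card := by
      have hcardeq : s.card = (T.image a).card := by
        rw [hs]
        rw [Finset.card_image_of_injOn, Finset.card_attach]
        intro b1 _ b2 _ h
        have h' : f b1.1 b1.2 = f b2.1 b2.2 := h
        apply Subtype.ext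
        rw [← hfa b1.1 b1.2, ← hfa b2.1 b2.2, h']
      omega
    refine ⟨s, hscard, Or.inr ⟨?_, ?_⟩⟩
    · refine Multiset.Nodup.map_on ?_ s.nodup
      intro x hx y hy h
      exact hainj x (Finset.mem_val.mp hx) y (Finset.mem_val.mp hy) h
    · intro x hx y hy hne
      simp only [Multiset.mem_map] at hx hy
      obtain ⟨i, hi, rfl⟩ := hx
      obtain ⟨j, hj, rfl⟩ := hy
      exact hdist i (hsT i (Finset.mem_val.mp hi)) j (hsT j (Finset.mem_val.mp hj)) hne
end

section
/- For every integer n ≥ 3 there exists a graph H on (n-1)^2 vertices whose vertex set is partitioned into n-1 classes of size n-1 each, such that any two vertices in the same class have equal degree in H and any two vertices in distinct classes have distinct degrees in H. -/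
attribute [local instance] Classical.propDecidable

open Finset

private lemma count_ge (N t : ℕ) :
    (Finset.univ.filter fun v : Fin N => t ≤ v.val).card = N - t := by
  rw [← Nat.card_Ico t N]
  refine Finset.card_bij (fun v _ => v.val) ?_ ?_ ?_
  · intro a ha
    simp only [mem_filter, mem_univ, true_and] at ha
    simp [Finset.mem_Ico, ha, a.isLt]
  · intro a _ b _ h
    exact Fin.val_injective h
  · intro b hb
    simp only [Finset.mem_Ico] at hb
    exact ⟨⟨b, hb.2⟩, by simp [hb.1], rfl⟩

private lemma aux_stmt (m : ℕ) (hm : 2 ≤ m) :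
    ∃ (H : SimpleGraph (Fin (m ^ 2)))
      (c : Fin (m ^ 2) → Fin m),
      (∀ i : Fin m,
        (Finset.univ.filter fun v => c v = i).card = m) ∧
      (∀ u v : Fin (m ^ 2), c u = c v ↔ H.degree u = H.degree v) := by
  have hm0 : 0 < m := by omega
  have hsq : m ^ 2 = m * m := sq m
  have hdivlt : ∀ v : Fin (m ^ 2), v.val / m < m := by
    intro v
    exact Nat.div_lt_of_lt_mul (hsq ▸ v.isLt)
  set H : SimpleGraph (Fin (m ^ 2)) :=
    { Adj := fun u v => u ≠ v ∧ m ≤ u.val / m + v.val / m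
      symm := ⟨by
        rintro u v ⟨h1, h2⟩
        exact ⟨h1.symm, by omega⟩⟩
      loopless := ⟨fun v h => h.1 rfl⟩ } with hH
  refine ⟨H, fun v => ⟨v.val / m, hdivlt v⟩, ?_, ?_⟩
  · -- class sizes
    intro i
    have hIco : (Finset.Ico (i.val * m) (i.val * m + m)).card = m := by
      rw [Nat.card_Ico]; omega
    refine Eq.trans (Finset.card_bij (fun v _ => v.val) ?_ ?_ ?_) hIco
    · intro a ha
      simp only [mem_filter, mem_univ, true_and, Fin.ext_iff] at ha
      have ha' : a.val / m = i.val := ha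
      have hdm := Nat.div_add_mod a.val m
      have hmod := Nat.mod_lt a.val hm0
      have hcomm : m * (i.val) = i.val * m := Nat.mul_comm _ _
      rw [ha'] at hdm
      simp only [Finset.mem_Ico]
      omega
    · intro a _ b _ h
      exact Fin.val_injective h
    · intro b hb
      simp only [Finset.mem_Ico] at hb
      have hub : (i.val + 1) * m ≤ m * m := Nat.mul_le_mul_right m i.isLt
      rw [add_mul] at hub
      have hbN : b < m ^ 2 := by rw [hsq]; omega
      refine ⟨⟨b, hbN⟩, ?_, rfl⟩
      simp only [mem_filter, mem_univ, true_and, Fin.ext_iff]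
      exact Nat.div_eq_of_lt_le hb.1 (by rw [add_mul]; omega)
  · -- degrees
    have key : ∀ (w : Fin (m ^ 2)) (inst : Fintype (H.neighborSet w)),
        @SimpleGraph.degree _ H w inst
          = (w.val / m) * m - (if m ≤ 2 * (w.val / m) then 1 else 0) := by
      intro u inst
      rw [Subsingleton.elim inst (SimpleGraph.neighborSetFintype H u)]
      rw [← SimpleGraph.card_neighborFinset_eq_degree]
      have hnf : ∀ (inst2 : Fintype (H.neighborSet u)), @SimpleGraph.neighborFinset _ H u inst2
          = (Finset.univ.filter fun v : Fin (m ^ 2) => (m - u.val / m) * m ≤ v.val).erase u := by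
        intro inst2
        ext v
        simp only [SimpleGraph.mem_neighborFinset, Finset.mem_erase, mem_filter, mem_univ,
          true_and, hH]
        have hu := hdivlt u
        have hv := hdivlt v
        constructor
        · rintro ⟨h1, h2⟩
          refine ⟨h1.symm, ?_⟩
          rw [← Nat.le_div_iff_mul_le hm0]
          omega
        · rintro ⟨h1, h2⟩
          rw [← Nat.le_div_iff_mul_le hm0] at h2
          exact ⟨h1.symm, by omega⟩
      rw [hnf]
      have hcard : (Finset.univ.filter fun v : Fin (m ^ 2) => (m - u.val / m) * m ≤ v.val).card
          = (u.val / m) * m := by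
        rw [count_ge, Nat.sub_mul]
        have hle : (u.val / m) * m ≤ m * m := Nat.mul_le_mul_right m (le_of_lt (hdivlt u))
        set a := (u.val / m) * m
        rw [hsq]
        omega
      by_cases hmem : m ≤ 2 * (u.val / m)
      · have hu : u ∈ (Finset.univ.filter fun v : Fin (m ^ 2) => (m - u.val / m) * m ≤ v.val) := by
          simp only [mem_filter, mem_univ, true_and]
          rw [← Nat.le_div_iff_mul_le hm0]
          omega
        rw [Finset.card_erase_of_mem hu, hcard, if_pos hmem]
      · have hu : u ∉ (Finset.univ.filter fun v : Fin (m ^ 2) => (m - u.val / m) * m ≤ v.val) := by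
          simp only [mem_filter, mem_univ, true_and]
          rw [← Nat.le_div_iff_mul_le hm0]
          omega
        rw [Finset.erase_eq_of_notMem hu, hcard, if_neg hmem, Nat.sub_zero]
    have arith : ∀ x y : ℕ, x < y → y < m →
        x * m - (if m ≤ 2 * x then 1 else 0) < y * m - (if m ≤ 2 * y then 1 else 0) := by
      intro x y hxy hy
      have h1 : (x + 1) * m ≤ y * m := Nat.mul_le_mul_right m (by omega)
      rw [add_mul] at h1
      set a := x * m
      set b := y * m
      split_ifs <;> omega
    intro u v
    rw [key u _, key v _]
    constructor
    · intro h
      have hval : u.val / m = v.val / m := by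
        simpa [Fin.ext_iff] using h
      rw [hval]
    · intro h
      rcases lt_trichotomy (u.val / m) (v.val / m) with hlt | heq | hgt
      · exact absurd h (Nat.ne_of_lt (arith _ _ hlt (hdivlt v)))
      · exact Fin.ext heq
      · exact absurd h.symm (Nat.ne_of_lt (arith _ _ hgt (hdivlt u)))

/-- For every `n ≥ 3` there exists a graph `H` on `(n-1)^2` vertices whose
vertex set is partitioned into `n - 1` classes of size `n - 1` each, such that
two vertices have equal degree in `H` iff they lie in the same class. -/
theorem stmt_7 (n : ℕ) (hn : 3 ≤ n) :
    ∃ (H : SimpleGraph (Fin ((n - 1) ^ 2)))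
      (c : Fin ((n - 1) ^ 2) → Fin (n - 1)),
      (∀ i : Fin (n - 1),
        (Finset.univ.filter fun v => c v = i).card = n - 1) ∧
      (∀ u v : Fin ((n - 1) ^ 2), c u = c v ↔ H.degree u = H.degree v) := by
  exact aux_stmt (n - 1) (by omega)
end

section
/- Let F be a graph on 5 vertices such that F contains no triangle K_3 and the complement of F contains no claw K_{1,3}. Then F is isomorphic to the 5-cycle C_5 or to the complete bipartite graph K_{2,3}. -/
def adjT (b0 b1 b2 b3 b4 b5 b6 b7 b8 b9 : Bool) (i j : Fin 5) : Bool :=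
  match i.val, j.val with
  | 0, 1 => b0 | 1, 0 => b0
  | 0, 2 => b1 | 2, 0 => b1
  | 0, 3 => b2 | 3, 0 => b2
  | 0, 4 => b3 | 4, 0 => b3
  | 1, 2 => b4 | 2, 1 => b4
  | 1, 3 => b5 | 3, 1 => b5
  | 1, 4 => b6 | 4, 1 => b6
  | 2, 3 => b7 | 3, 2 => b7
  | 2, 4 => b8 | 4, 2 => b8
  | 3, 4 => b9 | 4, 3 => b9
  | _, _ => false

def pFun (q0 q1 q2 q3 q4 : Fin 5) (i : Fin 5) : Fin 5 :=
  match i.val with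
  | 0 => q0 | 1 => q1 | 2 => q2 | 3 => q3 | _ => q4

def c5B (i j : Fin 5) : Bool := decide ((i.val + 1) % 5 = j.val ∨ (j.val + 1) % 5 = i.val)
def k23B (i j : Fin 5) : Bool := decide ((i.val < 2 ∧ 2 ≤ j.val) ∨ (j.val < 2 ∧ 2 ≤ i.val))
def allFin5 (f : Fin 5 → Bool) : Bool := f 0 && f 1 && f 2 && f 3 && f 4
def exFin5 (f : Fin 5 → Bool) : Bool := f 0 || f 1 || f 2 || f 3 || f 4

def tri (b0 b1 b2 b3 b4 b5 b6 b7 b8 b9 : Bool) : Bool :=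
  allFin5 fun i => allFin5 fun j => allFin5 fun k =>
    !(adjT b0 b1 b2 b3 b4 b5 b6 b7 b8 b9 i j && adjT b0 b1 b2 b3 b4 b5 b6 b7 b8 b9 j k &&
      adjT b0 b1 b2 b3 b4 b5 b6 b7 b8 b9 i k)

def claw (b0 b1 b2 b3 b4 b5 b6 b7 b8 b9 : Bool) : Bool :=
  allFin5 fun v => allFin5 fun a => allFin5 fun b => allFin5 fun c =>
    decide (v = a) || decide (v = b) || decide (v = c) || decide (a = b) || decide (a = c) ||
    decide (b = c) || adjT b0 b1 b2 b3 b4 b5 b6 b7 b8 b9 v a ||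
    adjT b0 b1 b2 b3 b4 b5 b6 b7 b8 b9 v b || adjT b0 b1 b2 b3 b4 b5 b6 b7 b8 b9 v c

def good (b0 b1 b2 b3 b4 b5 b6 b7 b8 b9 : Bool) : Bool :=
  exFin5 fun q0 => exFin5 fun q1 => exFin5 fun q2 => exFin5 fun q3 => exFin5 fun q4 =>
    (!decide (q0 = q1) && !decide (q0 = q2) && !decide (q0 = q3) && !decide (q0 = q4) &&
     !decide (q1 = q2) && !decide (q1 = q3) && !decide (q1 = q4) && !decide (q2 = q3) &&
     !decide (q2 = q4) && !decide (q3 = q4)) &&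
    ((allFin5 fun i => allFin5 fun j =>
        adjT b0 b1 b2 b3 b4 b5 b6 b7 b8 b9 i j == c5B (pFun q0 q1 q2 q3 q4 i) (pFun q0 q1 q2 q3 q4 j)) ||
     (allFin5 fun i => allFin5 fun j =>
        adjT b0 b1 b2 b3 b4 b5 b6 b7 b8 b9 i j == k23B (pFun q0 q1 q2 q3 q4 i) (pFun q0 q1 q2 q3 q4 j)))

set_option maxRecDepth 10000 in
set_option maxHeartbeats 10000000 in
lemma key : ∀ b0 b1 b2 b3 b4 b5 b6 b7 b8 b9 : Bool,
    tri b0 b1 b2 b3 b4 b5 b6 b7 b8 b9 = true → claw b0 b1 b2 b3 b4 b5 b6 b7 b8 b9 = true →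
    good b0 b1 b2 b3 b4 b5 b6 b7 b8 b9 = true := by decide

lemma allFin5_forall : ∀ f : Fin 5 → Bool, allFin5 f = true ↔ ∀ i, f i = true := by decide

lemma exFin5_exists : ∀ f : Fin 5 → Bool, exFin5 f = true → ∃ i, f i = true := by decide

lemma pFun_inj (q0 q1 q2 q3 q4 : Fin 5) (h01 : q0 ≠ q1) (h02 : q0 ≠ q2) (h03 : q0 ≠ q3)
    (h04 : q0 ≠ q4) (h12 : q1 ≠ q2) (h13 : q1 ≠ q3) (h14 : q1 ≠ q4) (h23 : q2 ≠ q3)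
    (h24 : q2 ≠ q4) (h34 : q3 ≠ q4) :
    ∀ a b : Fin 5, pFun q0 q1 q2 q3 q4 a = pFun q0 q1 q2 q3 q4 b → a = b := by
  intro a b
  fin_cases a <;> fin_cases b <;> simp only [pFun] <;> intro h <;> first | rfl | simp_all

lemma c5_iff : ∀ a b : Fin 5, c5B a b = true ↔ (SimpleGraph.cycleGraph 5).Adj a b := by decide

def τ : Fin 5 ≃ (Fin 2 ⊕ Fin 3) := (finSumFinEquiv (m := 2) (n := 3)).symm

lemma k23_iff : ∀ a b : Fin 5, k23B a b = true ↔
    (completeBipartiteGraph (Fin 2) (Fin 3)).Adj (τ a) (τ b) := by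
  intro a b
  fin_cases a <;> fin_cases b <;>
    simp [k23B, τ, completeBipartiteGraph, finSumFinEquiv, finAddFlip, Fin.addCases] <;> decide

lemma classify (b0 b1 b2 b3 b4 b5 b6 b7 b8 b9 : Bool)
    (h1 : ∀ i j k : Fin 5, ¬(adjT b0 b1 b2 b3 b4 b5 b6 b7 b8 b9 i j = true ∧
        adjT b0 b1 b2 b3 b4 b5 b6 b7 b8 b9 j k = true ∧
        adjT b0 b1 b2 b3 b4 b5 b6 b7 b8 b9 i k = true))
    (h2 : ∀ v a b c : Fin 5, v ≠ a → v ≠ b → v ≠ c → a ≠ b → a ≠ c → b ≠ c →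
        adjT b0 b1 b2 b3 b4 b5 b6 b7 b8 b9 v a = true ∨
        adjT b0 b1 b2 b3 b4 b5 b6 b7 b8 b9 v b = true ∨
        adjT b0 b1 b2 b3 b4 b5 b6 b7 b8 b9 v c = true) :
    ∃ p : Fin 5 → Fin 5, Function.Injective p ∧
      ((∀ i j, adjT b0 b1 b2 b3 b4 b5 b6 b7 b8 b9 i j = c5B (p i) (p j)) ∨
        (∀ i j, adjT b0 b1 b2 b3 b4 b5 b6 b7 b8 b9 i j = k23B (p i) (p j))) := by
  have htri : tri b0 b1 b2 b3 b4 b5 b6 b7 b8 b9 = true := by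
    simp only [tri, allFin5_forall]
    intro i j k
    cases hx : adjT b0 b1 b2 b3 b4 b5 b6 b7 b8 b9 i j
    · simp
    · cases hy : adjT b0 b1 b2 b3 b4 b5 b6 b7 b8 b9 j k
      · simp
      · cases hz : adjT b0 b1 b2 b3 b4 b5 b6 b7 b8 b9 i k
        · simp
        · exact absurd ⟨hx, hy, hz⟩ (h1 i j k)
  have hclaw : claw b0 b1 b2 b3 b4 b5 b6 b7 b8 b9 = true := by
    simp only [claw, allFin5_forall]
    intro v a b c
    by_cases hva : v = a; · simp [hva]
    by_cases hvb : v = b; · simp [hvb]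
    by_cases hvc : v = c; · simp [hvc]
    by_cases hab : a = b; · simp [hab]
    by_cases hac : a = c; · simp [hac]
    by_cases hbc : b = c; · simp [hbc]
    cases hx : adjT b0 b1 b2 b3 b4 b5 b6 b7 b8 b9 v a
    · cases hy : adjT b0 b1 b2 b3 b4 b5 b6 b7 b8 b9 v b
      · cases hz : adjT b0 b1 b2 b3 b4 b5 b6 b7 b8 b9 v c
        · have := h2 v a b c hva hvb hvc hab hac hbc
          simp [hx, hy, hz] at this
        · simp
      · simp
    · simp
  have hgood := key b0 b1 b2 b3 b4 b5 b6 b7 b8 b9 htri hclaw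
  rw [good] at hgood
  obtain ⟨q0, hgood⟩ := exFin5_exists _ hgood
  obtain ⟨q1, hgood⟩ := exFin5_exists _ hgood
  obtain ⟨q2, hgood⟩ := exFin5_exists _ hgood
  obtain ⟨q3, hgood⟩ := exFin5_exists _ hgood
  obtain ⟨q4, hgood⟩ := exFin5_exists _ hgood
  simp only [Bool.and_eq_true, Bool.or_eq_true, Bool.not_eq_true', decide_eq_false_iff_not,
    allFin5_forall, beq_iff_eq] at hgood
  obtain ⟨⟨⟨⟨⟨⟨⟨⟨⟨⟨h01, h02⟩, h03⟩, h04⟩, h12⟩, h13⟩, h14⟩, h23⟩, h24⟩, h34⟩, hm⟩ := hgood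
  refine ⟨pFun q0 q1 q2 q3 q4,
    fun a b hab => pFun_inj q0 q1 q2 q3 q4 h01 h02 h03 h04 h12 h13 h14 h23 h24 h34 a b hab, ?_⟩
  exact hm

/-- `F` contains a claw `K_{1,3}` as a subgraph: a vertex adjacent to three
distinct vertices. -/
def HasClawSub {V : Type*} (F : SimpleGraph V) : Prop :=
  ∃ v a b c : V, a ≠ b ∧ a ≠ c ∧ b ≠ c ∧ F.Adj v a ∧ F.Adj v b ∧ F.Adj v c

/-- If `F` is a graph on 5 vertices containing no triangle, whose complement
contains no claw, then `F` is isomorphic to `C_5` or to `K_{2,3}`. -/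
theorem stmt_9 {V : Type} [Fintype V] [DecidableEq V] (F : SimpleGraph V)
    (h5 : Fintype.card V = 5) (ht : F.CliqueFree 3) (hc : ¬ HasClawSub Fᶜ) :
    Nonempty (F ≃g SimpleGraph.cycleGraph 5) ∨
    Nonempty (F ≃g completeBipartiteGraph (Fin 2) (Fin 3)) := by
  have hc : ¬ ∃ v a b c : V, a ≠ b ∧ a ≠ c ∧ b ≠ c ∧ Fᶜ.Adj v a ∧ Fᶜ.Adj v b ∧ Fᶜ.Adj v c := hc
  classical
  let e : V ≃ Fin 5 := Fintype.equivFinOfCardEq h5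
  obtain ⟨B, hB⟩ : ∃ B : Fin 5 → Fin 5 → Bool,
      ∀ x y, B x y = true ↔ F.Adj (e.symm x) (e.symm y) :=
    ⟨fun x y => decide (F.Adj (e.symm x) (e.symm y)), fun x y => by simp⟩
  have hA : ∀ i j : Fin 5,
      adjT (B 0 1) (B 0 2) (B 0 3) (B 0 4) (B 1 2) (B 1 3) (B 1 4) (B 2 3) (B 2 4) (B 3 4)
        i j = true ↔ F.Adj (e.symm i) (e.symm j) := by
    intro i j
    fin_cases i <;> fin_cases j <;>
      simp only [adjT] <;>
      first
        | exact hB _ _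
        | (rw [SimpleGraph.adj_comm]; exact hB _ _)
        | simp [SimpleGraph.irrefl]
  have h1 : ∀ i j k : Fin 5, ¬(adjT (B 0 1) (B 0 2) (B 0 3) (B 0 4) (B 1 2) (B 1 3) (B 1 4)
      (B 2 3) (B 2 4) (B 3 4) i j = true ∧ adjT (B 0 1) (B 0 2) (B 0 3) (B 0 4) (B 1 2) (B 1 3)
      (B 1 4) (B 2 3) (B 2 4) (B 3 4) j k = true ∧ adjT (B 0 1) (B 0 2) (B 0 3) (B 0 4) (B 1 2)
      (B 1 3) (B 1 4) (B 2 3) (B 2 4) (B 3 4) i k = true) := by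
    rintro i j k ⟨hij, hjk, hik⟩
    exact ht _ (SimpleGraph.is3Clique_triple_iff.mpr
      ⟨(hA i j).mp hij, (hA i k).mp hik, (hA j k).mp hjk⟩)
  have h2 : ∀ v a b c : Fin 5, v ≠ a → v ≠ b → v ≠ c → a ≠ b → a ≠ c → b ≠ c →
      adjT (B 0 1) (B 0 2) (B 0 3) (B 0 4) (B 1 2) (B 1 3) (B 1 4) (B 2 3) (B 2 4) (B 3 4)
        v a = true ∨
      adjT (B 0 1) (B 0 2) (B 0 3) (B 0 4) (B 1 2) (B 1 3) (B 1 4) (B 2 3) (B 2 4) (B 3 4)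
        v b = true ∨
      adjT (B 0 1) (B 0 2) (B 0 3) (B 0 4) (B 1 2) (B 1 3) (B 1 4) (B 2 3) (B 2 4) (B 3 4)
        v c = true := by
    intro v a b c hva hvb hvc hab hac hbc
    by_contra hcon
    push_neg at hcon
    obtain ⟨ha, hb', hc'⟩ := hcon
    refine hc ⟨e.symm v, e.symm a, e.symm b, e.symm c,
      fun h => hab (e.symm.injective h), fun h => hac (e.symm.injective h),
      fun h => hbc (e.symm.injective h), ?_, ?_, ?_⟩
    · exact (SimpleGraph.compl_adj F _ _).mpr ⟨fun h => hva (e.symm.injective h),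
        fun h => ha ((hA v a).mpr h)⟩
    · exact (SimpleGraph.compl_adj F _ _).mpr ⟨fun h => hvb (e.symm.injective h),
        fun h => hb' ((hA v b).mpr h)⟩
    · exact (SimpleGraph.compl_adj F _ _).mpr ⟨fun h => hvc (e.symm.injective h),
        fun h => hc' ((hA v c).mpr h)⟩
  obtain ⟨p, hp, hcase⟩ := classify _ _ _ _ _ _ _ _ _ _ h1 h2
  have hσ := Finite.injective_iff_bijective.mp hp
  let σ : Fin 5 ≃ Fin 5 := Equiv.ofBijective p hσ
  have hσp : ∀ x, σ x = p x := fun _ => rfl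
  rcases hcase with hm | hm
  · left
    refine ⟨⟨e.trans σ, ?_⟩⟩
    intro u v
    have h' : F.Adj u v ↔ F.Adj (e.symm (e u)) (e.symm (e v)) := by
      rw [e.symm_apply_apply, e.symm_apply_apply]
    rw [show (e.trans σ) u = σ (e u) from rfl, show (e.trans σ) v = σ (e v) from rfl,
      hσp, hσp, ← c5_iff, ← hm, h']
    exact hA (e u) (e v)
  · right
    refine ⟨⟨(e.trans σ).trans τ, ?_⟩⟩
    intro u v
    have h' : F.Adj u v ↔ F.Adj (e.symm (e u)) (e.symm (e v)) := by
      rw [e.symm_apply_apply, e.symm_apply_apply]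
    rw [show ((e.trans σ).trans τ) u = τ (σ (e u)) from rfl,
      show ((e.trans σ).trans τ) v = τ (σ (e v)) from rfl,
      hσp, hσp, ← k23_iff, ← hm, h']
    exact hA (e u) (e v)
end

section
/- The unique graph F on 6 vertices such that F is triangle-free and the complement of F is claw-free (contains no K_{1,3} subgraph) is the complete bipartite graph K_{3,3}. Consequently, on 7 vertices no such graph exists; i.e., every graph on 7 vertices contains a triangle or its complement contains a claw. -/
section Aux

variable {V : Type} [Fintype V] [DecidableEq V] (F : SimpleGraph V) [DecidableRel F.Adj]

/-- No claw in the complement means minimum degree at least `n - 3`. -/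
lemma deg_lb (h : ¬ HasClawSub Fᶜ) (v : V) : Fintype.card V ≤ F.degree v + 3 := by
  classical
  set S : Finset V := (F.neighborFinset v)ᶜ \ {v} with hS
  have hmem : ∀ w ∈ S, Fᶜ.Adj v w := by
    intro w hw
    rw [hS, Finset.mem_sdiff, Finset.mem_compl, SimpleGraph.mem_neighborFinset,
      Finset.mem_singleton] at hw
    rw [SimpleGraph.compl_adj]
    exact ⟨fun hv => hw.2 hv.symm, hw.1⟩
  have hcardS : S.card ≤ 2 := by
    by_contra hlt
    push_neg at hlt
    obtain ⟨a, ha, b, hb, c, hc, hab, hac, hbc⟩ := Finset.two_lt_card.mp hlt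
    exact h ⟨v, a, b, c, hab, hac, hbc, hmem a ha, hmem b hb, hmem c hc⟩
  have hsub : (Finset.univ : Finset V) ⊆ insert v (F.neighborFinset v ∪ S) := by
    intro w _
    by_cases hw : w = v
    · simp [hw]
    · by_cases hwv : F.Adj v w
      · simp [SimpleGraph.mem_neighborFinset, hwv]
      · simp [hS, SimpleGraph.mem_neighborFinset, hw, hwv]
  calc Fintype.card V = (Finset.univ : Finset V).card := (Finset.card_univ).symm
    _ ≤ (insert v (F.neighborFinset v ∪ S)).card := Finset.card_le_card hsub
    _ ≤ (F.neighborFinset v ∪ S).card + 1 := Finset.card_insert_le _ _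
    _ ≤ (F.neighborFinset v).card + S.card + 1 := by
        have := Finset.card_union_le (F.neighborFinset v) S; omega
    _ ≤ F.degree v + 3 := by rw [SimpleGraph.degree]; omega

/-- In a triangle-free graph, neighborhoods of adjacent vertices are disjoint,
so a neighbor's degree is at most `n - deg v`. -/
lemma nbr_deg_ub (hfree : F.CliqueFree 3) {v u : V} (huv : F.Adj v u) :
    F.degree u ≤ Fintype.card V - F.degree v := by
  classical
  have hsub : F.neighborFinset u ⊆ (F.neighborFinset v)ᶜ := by
    intro w hw
    rw [SimpleGraph.mem_neighborFinset] at hw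
    rw [Finset.mem_compl, SimpleGraph.mem_neighborFinset]
    intro hvw
    exact hfree {v, u, w} (SimpleGraph.is3Clique_triple_iff.mpr ⟨huv, hvw, hw⟩)
  have := Finset.card_le_card hsub
  rw [Finset.card_compl] at this
  exact this

end Aux

/-- The unique graph on 6 vertices that is triangle-free with claw-free
complement is `K_{3,3}`; consequently, every graph on 7 vertices contains a
triangle or its complement contains a claw. -/
theorem stmt_10 :
    (∀ (V : Type) [Fintype V] [DecidableEq V] (F : SimpleGraph V),
      Fintype.card V = 6 → F.CliqueFree 3 → ¬ HasClawSub Fᶜ →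
      Nonempty (F ≃g completeBipartiteGraph (Fin 3) (Fin 3))) ∧
    (∀ (V : Type) [Fintype V] (F : SimpleGraph V),
      Fintype.card V = 7 → ¬ F.CliqueFree 3 ∨ HasClawSub Fᶜ) := by
  constructor
  · intro V _ _ F hcard hfree hclaw
    classical
    -- every degree is at least 3
    have hdeg3le : ∀ w : V, 3 ≤ F.degree w := by
      intro w; have := deg_lb F hclaw w; omega
    -- every degree is exactly 3
    have hdeg3 : ∀ w : V, F.degree w = 3 := by
      intro w
      obtain ⟨u, hu⟩ : (F.neighborFinset w).Nonempty := by
        rw [← Finset.card_pos, ← SimpleGraph.degree]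
        have := hdeg3le w; omega
      rw [SimpleGraph.mem_neighborFinset] at hu
      have h1 := nbr_deg_ub F hfree hu
      have h2 := hdeg3le u
      have h3 := hdeg3le w
      omega
    have : Nonempty V := by
      rw [← Fintype.card_pos_iff]; omega
    obtain ⟨v⟩ := this
    set A : Finset V := F.neighborFinset v with hAdef
    have hA : A.card = 3 := hdeg3 v
    have hAc : (Aᶜ : Finset V).card = 3 := by
      rw [Finset.card_compl]; omega
    -- neighborhood of each element of A is exactly Aᶜ
    have hNA : ∀ a ∈ A, F.neighborFinset a = Aᶜ := by
      intro a ha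
      have hva : F.Adj v a := by rwa [← SimpleGraph.mem_neighborFinset]
      have hsub : F.neighborFinset a ⊆ Aᶜ := by
        intro w hw
        rw [SimpleGraph.mem_neighborFinset] at hw
        rw [Finset.mem_compl, hAdef, SimpleGraph.mem_neighborFinset]
        intro hvw
        exact hfree {v, a, w} (SimpleGraph.is3Clique_triple_iff.mpr ⟨hva, hvw, hw⟩)
      apply Finset.eq_of_subset_of_card_le hsub
      rw [hAc]
      have := hdeg3 a
      rw [SimpleGraph.degree] at this
      omega
    have hAne : A.Nonempty := by rw [← Finset.card_pos]; omega
    -- adjacency characterization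
    have hadj : ∀ x y : V, F.Adj x y ↔ ((x ∈ A ∧ y ∉ A) ∨ (x ∉ A ∧ y ∈ A)) := by
      intro x y
      constructor
      · intro hxy
        by_cases hx : x ∈ A <;> by_cases hy : y ∈ A
        · exfalso
          have := hNA x hx
          have : y ∈ (Aᶜ : Finset V) := by
            rw [← this, SimpleGraph.mem_neighborFinset]; exact hxy
          rw [Finset.mem_compl] at this; exact this hy
        · exact Or.inl ⟨hx, hy⟩
        · exact Or.inr ⟨hx, hy⟩
        · exfalso
          obtain ⟨a, ha⟩ := hAne
          have hax : F.Adj a x := by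
            rw [← SimpleGraph.mem_neighborFinset, hNA a ha, Finset.mem_compl]; exact hx
          have hay : F.Adj a y := by
            rw [← SimpleGraph.mem_neighborFinset, hNA a ha, Finset.mem_compl]; exact hy
          exact hfree {a, x, y} (SimpleGraph.is3Clique_triple_iff.mpr ⟨hax, hay, hxy⟩)
      · rintro (⟨hx, hy⟩ | ⟨hx, hy⟩)
        · rw [← SimpleGraph.mem_neighborFinset, hNA x hx, Finset.mem_compl]; exact hy
        · have : F.Adj y x := by
            rw [← SimpleGraph.mem_neighborFinset, hNA y hy, Finset.mem_compl]; exact hx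
          exact this.symm
    -- build the equivalence
    have hcardA : Fintype.card {x // x ∈ A} = 3 := by simpa using hA
    have hcardAc : Fintype.card {x : V // ¬ x ∈ A} = 3 := by
      rw [Fintype.card_subtype_compl, hcardA]; omega
    let eA : {x // x ∈ A} ≃ Fin 3 := Fintype.equivFinOfCardEq hcardA
    let eB : {x : V // ¬ x ∈ A} ≃ Fin 3 := Fintype.equivFinOfCardEq hcardAc
    let e : V ≃ (Fin 3 ⊕ Fin 3) :=
      (Equiv.sumCompl (· ∈ A)).symm.trans (Equiv.sumCongr eA eB)
    have he : ∀ x : V, (e x).isLeft ↔ x ∈ A := by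
      intro x
      by_cases hx : x ∈ A <;>
        simp [e, Equiv.sumCompl, hx]
    refine ⟨⟨e, ?_⟩⟩
    intro x y
    have hx := he x
    have hy := he y
    rw [completeBipartiteGraph_adj, hadj x y]
    rcases hex : e x with a | a <;> rcases hey : e y with b | b <;>
      simp [hex, hey] at hx hy ⊢ <;> simp [hx, hy]
  · intro V _ F hcard
    classical
    by_cases hfree : F.CliqueFree 3
    · right
      by_contra hclaw
      have hdeg : ∀ w : V, 4 ≤ F.degree w := by
        intro w; have := deg_lb F hclaw w; omega
      have : Nonempty V := by rw [← Fintype.card_pos_iff]; omega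
      obtain ⟨v⟩ := this
      obtain ⟨u, hu⟩ : (F.neighborFinset v).Nonempty := by
        rw [← Finset.card_pos, ← SimpleGraph.degree]
        have := hdeg v; omega
      rw [SimpleGraph.mem_neighborFinset] at hu
      have h1 := nbr_deg_ub F hfree hu
      have h2 := hdeg u
      have h3 := hdeg v
      omega
    · exact Or.inl hfree
end
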